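/- Let f : ℝ → ℂ be a continuously differentiable 2π-periodic function with zero mean, and suppose e^{f} extends to the boundary value of a nonvanishing holomorphic function on the unit disk (i.e., there exists F holomorphic and nonvanishing on the closed unit disk with F(e^{iθ}) = e^{f(θ)}). Then f itself differs from the boundary value of a holomorphic function on the disk by a constant in 2πi ℤ; equivalently, the winding-type periods of f are integers. -/

import Mathlib

open Complex Metric

-- telescoping product
lemma tele_prod (g : ℕ → ℂ) (n : ℕ) (hg : ∀ j ≤ n, g j ≠ 0) :
    ∏ j ∈ Finset.range n, g (j + 1) / g j = g n / g 0 := by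
  induction n with
  | zero => simp [div_self (hg 0 le_rfl)]
  | succ n ih =>
    rw [Finset.prod_range_succ, ih (fun j hj => hg j (hj.trans (Nat.le_succ n)))]
    have h0 := hg 0 (Nat.zero_le _)
    have hn := hg n (Nat.le_succ n)
    field_simp

lemma slit_of_near_one {w : ℂ} (h : ‖w - 1‖ < 1) : w ∈ Complex.slitPlane := by
  rw [Complex.mem_slitPlane_iff]
  left
  have : |(w - 1).re| < 1 := lt_of_le_of_lt (Complex.abs_re_le_norm _) h
  have : (w - 1).re > -1 := by
    rcases abs_lt.mp this with ⟨h1, _⟩; exact h1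
  have hre : (w - 1).re = w.re - 1 := by simp [Complex.sub_re]
  linarith

/-- If `f` is a `C¹` `2π`-periodic zero-mean function on the circle such that `e^f` is the
boundary value of a nonvanishing holomorphic function on the disk, then `f` itself differs
from the boundary value of a holomorphic function on the disk by a constant in `2πiℤ`. -/
theorem stmt15 (f : ℝ → ℂ) (hf : ContDiff ℝ 1 f)
    (hper : ∀ θ : ℝ, f (θ + 2 * Real.pi) = f θ)
    (hmean : ∫ θ in (0 : ℝ)..(2 * Real.pi), f θ = 0)
    (F : ℂ → ℂ)
    (hFhol : DifferentiableOn ℂ F (ball (0 : ℂ) 1))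
    (hFcont : ContinuousOn F (closedBall (0 : ℂ) 1))
    (hFne : ∀ z ∈ closedBall (0 : ℂ) 1, F z ≠ 0)
    (hbd : ∀ θ : ℝ, F (Complex.exp (θ * Complex.I)) = Complex.exp (f θ)) :
    ∃ G : ℂ → ℂ, DifferentiableOn ℂ G (ball (0 : ℂ) 1) ∧
      ContinuousOn G (closedBall (0 : ℂ) 1) ∧
      ∃ k : ℤ, ∀ θ : ℝ,
        f θ = G (Complex.exp (θ * Complex.I)) + 2 * Real.pi * Complex.I * k := by
  -- minimum modulus
  obtain ⟨z₀, hz₀, hmin'⟩ := (isCompact_closedBall (0:ℂ) 1).exists_isMinOn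
    (nonempty_closedBall.mpr zero_le_one) hFcont.norm
  have hmin : ∀ z ∈ closedBall (0:ℂ) 1, ‖F z₀‖ ≤ ‖F z‖ := fun z hz => hmin' hz
  set m := ‖F z₀‖ with hm
  have hm0 : 0 < m := norm_pos_iff.mpr (hFne z₀ hz₀)
  -- uniform continuity
  have huc := (isCompact_closedBall (0:ℂ) 1).uniformContinuousOn_of_continuous hFcont
  rw [Metric.uniformContinuousOn_iff] at huc
  obtain ⟨δ, hδ0, hδ⟩ := huc m hm0
  obtain ⟨n', hn'⟩ := exists_nat_one_div_lt hδ0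
  set n : ℕ := n' + 1 with hn
  have hn0 : (0:ℝ) < n := by positivity
  have hstep : (1:ℝ)/n < δ := by exact_mod_cast hn'
  -- sample points
  set c : ℕ → ℂ := fun j => (((j:ℝ)/(n:ℝ) : ℝ) : ℂ) with hc
  have hcnorm : ∀ j ≤ n, ‖c j‖ ≤ 1 := by
    intro j hj
    simp only [hc, Complex.norm_real, Real.norm_eq_abs]
    rw [_root_.abs_of_nonneg (by positivity), div_le_one hn0]
    exact_mod_cast hj
  have hcz : ∀ j ≤ n, ∀ z ∈ closedBall (0:ℂ) 1, c j * z ∈ closedBall (0:ℂ) 1 := by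
    intro j hj z hz
    simp only [mem_closedBall, Complex.dist_eq, sub_zero] at hz ⊢
    calc ‖c j * z‖ = ‖c j‖ * ‖z‖ := by
          simp
      _ ≤ 1 * 1 := mul_le_mul (hcnorm j hj) hz (norm_nonneg z) zero_le_one
      _ = 1 := one_mul 1
  have hcball : ∀ j ≤ n, ∀ z ∈ ball (0:ℂ) 1, c j * z ∈ ball (0:ℂ) 1 := by
    intro j hj z hz
    simp only [mem_ball, Complex.dist_eq, sub_zero] at hz ⊢
    calc ‖c j * z‖ = ‖c j‖ * ‖z‖ := by
          simp
      _ ≤ 1 * ‖z‖ := by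
          exact mul_le_mul_of_nonneg_right (hcnorm j hj) (norm_nonneg z)
      _ < 1 := by simpa using hz
  -- the ratios are close to 1
  have hratio : ∀ z ∈ closedBall (0:ℂ) 1, ∀ j < n,
      ‖F (c (j+1) * z) / F (c j * z) - 1‖ < 1 := by
    intro z hz j hj
    have haj : c (j+1) * z ∈ closedBall (0:ℂ) 1 := hcz (j+1) hj z hz
    have hbj : c j * z ∈ closedBall (0:ℂ) 1 := hcz j hj.le z hz
    have hdist : dist (c (j+1) * z) (c j * z) < δ := by
      have : c (j+1) - c j = ((1/(n:ℝ) : ℝ) : ℂ) := by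
        simp only [hc]
        rw [← Complex.ofReal_sub]
        congr 1
        field_simp
        push_cast; ring
      calc dist (c (j+1) * z) (c j * z) = ‖(c (j+1) - c j) * z‖ := by
            rw [dist_eq_norm]; ring_nf
        _ = ‖c (j+1) - c j‖ * ‖z‖ := norm_mul _ _
        _ ≤ (1/(n:ℝ)) * 1 := by
            apply mul_le_mul _ _ (norm_nonneg z) (by positivity)
            · rw [this, Complex.norm_real, Real.norm_eq_abs, _root_.abs_of_nonneg (by positivity)]
            · simpa [mem_closedBall, dist_eq_norm] using hz
        _ = 1/(n:ℝ) := mul_one _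
        _ < δ := hstep
    have hFd : ‖F (c (j+1) * z) - F (c j * z)‖ < m := by
      have := hδ _ haj _ hbj hdist
      rwa [dist_eq_norm] at this
    have hFb : F (c j * z) ≠ 0 := hFne _ hbj
    have heq : F (c (j+1) * z) / F (c j * z) - 1
        = (F (c (j+1) * z) - F (c j * z)) / F (c j * z) := by
      rw [sub_div, div_self hFb]
    rw [heq, norm_div, div_lt_one (norm_pos_iff.mpr hFb)]
    exact lt_of_lt_of_le hFd (hmin _ hbj)
  -- the candidate logarithm
  set G : ℂ → ℂ := fun z => Complex.log (F 0) +
    ∑ j ∈ Finset.range n, Complex.log (F (c (j+1) * z) / F (c j * z)) with hG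
  have h0cb : (0:ℂ) ∈ closedBall (0:ℂ) 1 := mem_closedBall_self zero_le_one
  have hc0 : c 0 = 0 := by simp [hc]
  have hcn : c n = 1 := by
    simp only [hc]
    rw [div_self (ne_of_gt hn0)]
    simp
  -- exp G = F on the closed ball
  have hexpG : ∀ z ∈ closedBall (0:ℂ) 1, Complex.exp (G z) = F z := by
    intro z hz
    have hgne : ∀ j ≤ n, F (c j * z) ≠ 0 := fun j hj => hFne _ (hcz j hj z hz)
    rw [hG]
    simp only [Complex.exp_add, Complex.exp_sum]
    rw [Complex.exp_log (hFne 0 h0cb)]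
    have : ∀ j ∈ Finset.range n,
        Complex.exp (Complex.log (F (c (j+1) * z) / F (c j * z)))
          = F (c (j+1) * z) / F (c j * z) := by
      intro j hj
      exact Complex.exp_log (div_ne_zero (hgne (j+1) (Finset.mem_range.mp hj))
        (hgne j (Finset.mem_range.mp hj).le))
    rw [Finset.prod_congr rfl this, tele_prod (fun j => F (c j * z)) n hgne]
    rw [hcn, hc0, one_mul, zero_mul, mul_comm]
    exact div_mul_cancel₀ (F z) (hFne 0 h0cb)
  -- differentiability on the open ball
  have hGdiff : DifferentiableOn ℂ G (ball (0:ℂ) 1) := by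
    intro z hz
    apply DifferentiableAt.differentiableWithinAt
    apply (differentiableAt_const _).add
    apply DifferentiableAt.fun_sum
    intro j hj
    have hjn := Finset.mem_range.mp hj
    have hr : DifferentiableAt ℂ (fun w => F (c (j+1) * w) / F (c j * w)) z := by
      have hd : ∀ i ≤ n, DifferentiableAt ℂ (fun w => F (c i * w)) z := by
        intro i hi
        exact DifferentiableAt.comp z
          (hFhol.differentiableAt (isOpen_ball.mem_nhds (hcball i hi z hz)))
          (differentiableAt_id.const_mul _)
      exact (hd (j+1) hjn).div (hd j hjn.le)
        (hFne _ (hcz j hjn.le z (ball_subset_closedBall hz)))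
    exact hr.clog (slit_of_near_one (hratio z (ball_subset_closedBall hz) j hjn))
  -- continuity on the closed ball
  have hGcont : ContinuousOn G (closedBall (0:ℂ) 1) := by
    apply continuousOn_const.add
    apply continuousOn_finset_sum
    intro j hj
    have hjn := Finset.mem_range.mp hj
    intro z hz
    have hr : ContinuousWithinAt (fun w => F (c (j+1) * w) / F (c j * w))
        (closedBall (0:ℂ) 1) z := by
      have hd : ∀ i ≤ n, ContinuousWithinAt (fun w => F (c i * w))
          (closedBall (0:ℂ) 1) z := by
        intro i hi
        exact ContinuousWithinAt.comp (hFcont _ (hcz i hi z hz))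
          ((continuous_const.mul continuous_id).continuousWithinAt)
          (fun w hw => hcz i hi w hw)
      exact (hd (j+1) hjn).div (hd j hjn.le) (hFne _ (hcz j hjn.le z hz))
    exact hr.clog (slit_of_near_one (hratio z hz j hjn))
  -- boundary analysis
  have hSmem : ∀ θ : ℝ, Complex.exp (θ * Complex.I) ∈ closedBall (0:ℂ) 1 := by
    intro θ
    simp [mem_closedBall, Complex.dist_eq, Complex.norm_exp]
  set φ : ℝ → ℂ := fun θ => f θ - G (Complex.exp (θ * Complex.I)) with hφ
  have hφexp : ∀ θ, Complex.exp (φ θ) = 1 := by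
    intro θ
    rw [hφ]
    simp only [Complex.exp_sub]
    rw [hexpG _ (hSmem θ), hbd θ, div_self (Complex.exp_ne_zero _)]
  have hφint : ∀ θ, ∃ k : ℤ, φ θ = k * (2 * Real.pi * Complex.I) := by
    intro θ
    exact Complex.exp_eq_one_iff.mp (hφexp θ)
  have hφcont : Continuous φ := by
    apply hf.continuous.sub
    apply hGcont.comp_continuous _ hSmem
    exact Complex.continuous_exp.comp (Complex.continuous_ofReal.mul continuous_const)
  -- a continuous function into the lattice is constant
  have hkey : ∀ θ₁ θ₂ : ℝ, ‖φ θ₁ - φ θ₂‖ < 2 * Real.pi → φ θ₁ = φ θ₂ := by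
    intro θ₁ θ₂ hlt
    obtain ⟨k₁, hk₁⟩ := hφint θ₁
    obtain ⟨k₂, hk₂⟩ := hφint θ₂
    rw [hk₁, hk₂] at hlt ⊢
    have : φ θ₁ - φ θ₂ = ((k₁ - k₂ : ℤ) : ℂ) * (2 * Real.pi * Complex.I) := by
      rw [hk₁, hk₂]; push_cast; ring
    rw [hk₁, hk₂] at this
    rw [this] at hlt
    have hnorm : ‖((k₁ - k₂ : ℤ) : ℂ) * (2 * Real.pi * Complex.I)‖
        = |((k₁ - k₂ : ℤ) : ℝ)| * (2 * Real.pi) := by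
      simp only [norm_mul, Complex.norm_intCast, Complex.norm_real, Complex.norm_I,
        Real.norm_eq_abs, mul_one]
      rw [_root_.abs_of_nonneg Real.pi_pos.le]
      norm_num
    rw [hnorm] at hlt
    have h1 : |((k₁ - k₂ : ℤ) : ℝ)| < 1 := by
      by_contra hcon
      push_neg at hcon
      nlinarith [Real.two_pi_pos]
    have h2 : |k₁ - k₂| < 1 := by exact_mod_cast h1
    have h3 : k₁ - k₂ = 0 := Int.abs_lt_one_iff.mp h2
    have hk : k₁ = k₂ := by omega
    rw [hk]
  set S : Set ℝ := {θ | φ θ = φ 0} with hS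
  have hSclosed : IsClosed S := isClosed_eq hφcont continuous_const
  have hSopen : IsOpen S := by
    rw [Metric.isOpen_iff]
    intro θ₀ hθ₀
    have hct : ContinuousAt φ θ₀ := hφcont.continuousAt
    rw [Metric.continuousAt_iff] at hct
    obtain ⟨ε, hε0, hε⟩ := hct (2 * Real.pi) Real.two_pi_pos
    refine ⟨ε, hε0, fun θ hθ => ?_⟩
    have := hε hθ
    rw [dist_eq_norm] at this
    have heq := hkey θ θ₀ this
    simp only [hS, Set.mem_setOf_eq] at hθ₀ ⊢
    rw [heq, hθ₀]
  have hSuniv : S = Set.univ := by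
    rcases isClopen_iff.mp ⟨hSclosed, hSopen⟩ with h | h
    · exact absurd (by simp [hS] : (0:ℝ) ∈ S) (by simp [h])
    · exact h
  obtain ⟨k, hk⟩ := hφint 0
  refine ⟨G, hGdiff, hGcont, k, fun θ => ?_⟩
  have hθS : φ θ = φ 0 := by
    have : θ ∈ S := by rw [hSuniv]; trivial
    exact this
  have : f θ - G (Complex.exp (θ * Complex.I)) = k * (2 * Real.pi * Complex.I) := by
    rw [← hk, ← hθS]
  linear_combination this
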